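/- Let D = conv{0, e₁, e₂, e₃} ⊆ ℝ³ be the standard tetrahedron, where e₁, e₂, e₃ is the standard basis. Then the Lebesgue volume of the difference body D + (−D) equals 10/3 (that is, 20 times the volume of D). -/

import Mathlib

open Pointwise MeasureTheory

/-- The standard basis vector `eᵢ` of `ℝ³`. -/
noncomputable def stdVec (i : Fin 3) : EuclideanSpace ℝ (Fin 3) :=
  EuclideanSpace.single i (1 : ℝ)

/-- The standard tetrahedron `conv {0, e₁, e₂, e₃} ⊆ ℝ³`. -/
noncomputable def stdTetrahedron : Set (EuclideanSpace ℝ (Fin 3)) :=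
  convexHull ℝ {0, stdVec 0, stdVec 1, stdVec 2}


section Helpers
open Set ENNReal


lemma intPoly (a b c d e : ℝ) :
    ∫ x in a..b, (c + (d * x + e * x ^ 2)) =
      c * (b - a) + (d * ((b ^ 2 - a ^ 2) / 2) + e * ((b ^ 3 - a ^ 3) / 3)) := by
  have h1 : IntervalIntegrable (fun x : ℝ => d * x) volume a b :=
    (continuous_const.mul continuous_id).intervalIntegrable a b
  have h2 : IntervalIntegrable (fun x : ℝ => e * x ^ 2) volume a b :=
    (continuous_const.mul (continuous_pow 2)).intervalIntegrable a b
  rw [intervalIntegral.integral_add intervalIntegrable_const (h1.add h2),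
    intervalIntegral.integral_add h1 h2,
    intervalIntegral.integral_const, intervalIntegral.integral_const_mul,
    intervalIntegral.integral_const_mul, integral_id, integral_pow]
  push_cast
  simp [smul_eq_mul]
  ring

lemma set1 (r s : ℝ) (hr : 0 ≤ r) (hs : 0 ≤ s) :
    {c : ℝ | max c 0 ≤ r ∧ max (-c) 0 ≤ s} = Set.Icc (-s) r := by
  ext c
  simp only [mem_setOf_eq, mem_Icc, max_le_iff, hr, hs, and_true, neg_le]
  tauto

lemma vol2 (r s : ℝ) (hr : 0 ≤ r) (hs : 0 ≤ s) :
    volume {p : ℝ × ℝ | max p.1 0 + max p.2 0 ≤ r ∧ max (-p.1) 0 + max (-p.2) 0 ≤ s}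
      = ENNReal.ofReal (r ^ 2 / 2 + s ^ 2 / 2 + 2 * (r * s)) := by
  set S : Set (ℝ × ℝ) :=
    {p : ℝ × ℝ | max p.1 0 + max p.2 0 ≤ r ∧ max (-p.1) 0 + max (-p.2) 0 ≤ s} with hSdef
  have hS : MeasurableSet S := by
    have : S = {p : ℝ × ℝ | max p.1 0 + max p.2 0 ≤ r} ∩
        {p : ℝ × ℝ | max (-p.1) 0 + max (-p.2) 0 ≤ s} := rfl
    rw [this]
    exact (measurableSet_le (by fun_prop) measurable_const).inter
      (measurableSet_le (by fun_prop) measurable_const)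
  have key : ∀ b : ℝ, volume (Prod.mk b ⁻¹' S) =
      indicator (Icc (-s) r) (fun b => ENNReal.ofReal (r + s - |b|)) b := by
    intro b
    by_cases hb : b ∈ Icc (-s) r
    · rw [indicator_of_mem hb]
      obtain ⟨hb1, hb2⟩ := hb
      have h1 : 0 ≤ r - max b 0 := by simp [max_le_iff]; constructor <;> linarith
      have h2 : 0 ≤ s - max (-b) 0 := by simp [max_le_iff]; constructor <;> linarith
      have : Prod.mk b ⁻¹' S = Icc (-(s - max (-b) 0)) (r - max b 0) := by
        rw [← set1 _ _ h1 h2]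
        ext c
        simp only [mem_preimage, hSdef, mem_setOf_eq]
        constructor <;> rintro ⟨u, v⟩ <;> exact ⟨by linarith, by linarith⟩
      rw [this, Real.volume_Icc]
      congr 1
      have habs := max_zero_add_max_neg_zero_eq_abs_self b
      linarith
    · rw [indicator_of_notMem hb]
      have hemp : Prod.mk b ⁻¹' S = (∅ : Set ℝ) := by
        rw [eq_empty_iff_forall_notMem]
        intro c hc
        obtain ⟨u, v⟩ := hc
        apply hb
        constructor
        · nlinarith [le_max_left (-b) (0:ℝ), le_max_right (-c) (0:ℝ), le_max_right (-b) (0:ℝ)]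
        · nlinarith [le_max_left b (0:ℝ), le_max_right c (0:ℝ), le_max_right b (0:ℝ)]
      rw [hemp, measure_empty]
  rw [Measure.volume_eq_prod, Measure.prod_apply hS]
  simp_rw [key]
  rw [lintegral_indicator measurableSet_Icc]
  have hcont : Continuous fun b : ℝ => r + s - |b| := by fun_prop
  have hint : IntegrableOn (fun b : ℝ => r + s - |b|) (Icc (-s) r) := hcont.integrableOn_Icc
  have hnn : 0 ≤ᵐ[volume.restrict (Icc (-s) r)] fun b : ℝ => r + s - |b| := by
    refine (ae_restrict_mem measurableSet_Icc).mono fun b hb => ?_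
    have h : |b| ≤ r + s := abs_le.2 ⟨by linarith [hb.1], by linarith [hb.2]⟩
    exact sub_nonneg.2 h
  rw [← ofReal_integral_eq_lintegral_ofReal hint hnn,
    integral_Icc_eq_integral_Ioc, ← intervalIntegral.integral_of_le (by linarith : -s ≤ r),
    ← intervalIntegral.integral_add_adjacent_intervals (b := 0)
      (hcont.intervalIntegrable _ _) (hcont.intervalIntegrable _ _)]
  have p1 : ∫ b in (-s)..(0:ℝ), (r + s - |b|) =
      ∫ b in (-s)..(0:ℝ), ((r + s) + (1 * b + 0 * b ^ 2)) := by
    apply intervalIntegral.integral_congr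
    intro b hb
    rw [Set.uIcc_of_le (by linarith : -s ≤ (0:ℝ))] at hb
    show r + s - |b| = _
    rw [abs_of_nonpos hb.2]; ring
  have p2 : ∫ b in (0:ℝ)..r, (r + s - |b|) =
      ∫ b in (0:ℝ)..r, ((r + s) + ((-1) * b + 0 * b ^ 2)) := by
    apply intervalIntegral.integral_congr
    intro b hb
    rw [Set.uIcc_of_le hr] at hb
    show r + s - |b| = _
    rw [abs_of_nonneg hb.1]; ring
  rw [p1, p2, intPoly, intPoly]
  congr 1
  ring

lemma vol3 (r s : ℝ) (hr : 0 ≤ r) (hs : 0 ≤ s) :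
    volume {p : ℝ × ℝ × ℝ |
        max p.1 0 + (max p.2.1 0 + max p.2.2 0) ≤ r ∧
        max (-p.1) 0 + (max (-p.2.1) 0 + max (-p.2.2) 0) ≤ s}
      = ENNReal.ofReal (r ^ 3 / 6 + s ^ 3 / 6 + 3 / 2 * (r ^ 2 * s + r * s ^ 2)) := by
  set S : Set (ℝ × ℝ × ℝ) :=
    {p : ℝ × ℝ × ℝ |
        max p.1 0 + (max p.2.1 0 + max p.2.2 0) ≤ r ∧
        max (-p.1) 0 + (max (-p.2.1) 0 + max (-p.2.2) 0) ≤ s} with hSdef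
  have hS : MeasurableSet S := by
    have : S = {p : ℝ × ℝ × ℝ | max p.1 0 + (max p.2.1 0 + max p.2.2 0) ≤ r} ∩
        {p : ℝ × ℝ × ℝ | max (-p.1) 0 + (max (-p.2.1) 0 + max (-p.2.2) 0) ≤ s} := rfl
    rw [this]
    exact (measurableSet_le (by fun_prop) measurable_const).inter
      (measurableSet_le (by fun_prop) measurable_const)
  set g : ℝ → ℝ := fun a =>
    (r - max a 0) ^ 2 / 2 + (s - max (-a) 0) ^ 2 / 2 +
      2 * ((r - max a 0) * (s - max (-a) 0)) with hgdef
  have key : ∀ a : ℝ, volume (Prod.mk a ⁻¹' S) =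
      indicator (Icc (-s) r) (fun a => ENNReal.ofReal (g a)) a := by
    intro a
    by_cases ha : a ∈ Icc (-s) r
    · rw [indicator_of_mem ha]
      obtain ⟨ha1, ha2⟩ := ha
      have h1 : 0 ≤ r - max a 0 := by simp [max_le_iff]; constructor <;> linarith
      have h2 : 0 ≤ s - max (-a) 0 := by simp [max_le_iff]; constructor <;> linarith
      have : Prod.mk a ⁻¹' S =
          {p : ℝ × ℝ | max p.1 0 + max p.2 0 ≤ r - max a 0 ∧
            max (-p.1) 0 + max (-p.2) 0 ≤ s - max (-a) 0} := by
        ext c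
        simp only [mem_preimage, hSdef, mem_setOf_eq]
        constructor <;> rintro ⟨u, v⟩ <;> exact ⟨by linarith, by linarith⟩
      rw [this, vol2 _ _ h1 h2]
    · rw [indicator_of_notMem ha]
      have hemp : Prod.mk a ⁻¹' S = (∅ : Set (ℝ × ℝ)) := by
        rw [eq_empty_iff_forall_notMem]
        intro c hc
        obtain ⟨u, v⟩ := hc
        apply ha
        constructor
        · nlinarith [le_max_left (-a) (0:ℝ), le_max_right (-c.1) (0:ℝ),
            le_max_right (-c.2) (0:ℝ), le_max_right (-a) (0:ℝ)]
        · nlinarith [le_max_left a (0:ℝ), le_max_right c.1 (0:ℝ),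
            le_max_right c.2 (0:ℝ), le_max_right a (0:ℝ)]
      rw [hemp, measure_empty]
  rw [Measure.volume_eq_prod, Measure.prod_apply hS]
  simp_rw [key]
  rw [lintegral_indicator measurableSet_Icc]
  have hcont : Continuous g := by fun_prop
  have hint : IntegrableOn g (Icc (-s) r) := hcont.integrableOn_Icc
  have hnn : 0 ≤ᵐ[volume.restrict (Icc (-s) r)] g := by
    refine (ae_restrict_mem measurableSet_Icc).mono fun a ha => ?_
    have h1 : 0 ≤ r - max a 0 := by simp [max_le_iff]; constructor <;> linarith [ha.1, ha.2]
    have h2 : 0 ≤ s - max (-a) 0 := by simp [max_le_iff]; constructor <;> linarith [ha.1, ha.2]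
    have : (0:ℝ) ≤ g a := by
      rw [hgdef]
      have := mul_nonneg h1 h2
      positivity
    exact this
  rw [← ofReal_integral_eq_lintegral_ofReal hint hnn,
    integral_Icc_eq_integral_Ioc, ← intervalIntegral.integral_of_le (by linarith : -s ≤ r),
    ← intervalIntegral.integral_add_adjacent_intervals (b := 0)
      (hcont.intervalIntegrable _ _) (hcont.intervalIntegrable _ _)]
  have p1 : ∫ a in (-s)..(0:ℝ), g a =
      ∫ a in (-s)..(0:ℝ), ((r ^ 2 / 2 + s ^ 2 / 2 + 2 * (r * s)) +
        ((s + 2 * r) * a + (1 / 2) * a ^ 2)) := by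
    apply intervalIntegral.integral_congr
    intro a ha
    rw [Set.uIcc_of_le (by linarith : -s ≤ (0:ℝ))] at ha
    show g a = _
    rw [hgdef]
    simp only [max_eq_right ha.2, max_eq_left (by linarith [ha.2] : (0:ℝ) ≤ -a)]
    ring
  have p2 : ∫ a in (0:ℝ)..r, g a =
      ∫ a in (0:ℝ)..r, ((r ^ 2 / 2 + s ^ 2 / 2 + 2 * (r * s)) +
        ((-(r + 2 * s)) * a + (1 / 2) * a ^ 2)) := by
    apply intervalIntegral.integral_congr
    intro a ha
    rw [Set.uIcc_of_le hr] at ha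
    show g a = _
    rw [hgdef]
    simp only [max_eq_left ha.1, max_eq_right (by linarith [ha.1] : -a ≤ (0:ℝ))]
    ring
  rw [p1, p2, intPoly, intPoly]
  congr 1
  ring

def Kset (r s : ℝ) : Set (EuclideanSpace ℝ (Fin 3)) :=
  {z | (∑ i, max (z i) 0) ≤ r ∧ (∑ i, max (-z i) 0) ≤ s}

noncomputable def Φmap : EuclideanSpace ℝ (Fin 3) → ℝ × ℝ × ℝ := fun z => (z 0, z 1, z 2)

lemma Φmp : MeasurePreserving Φmap volume volume := by
  have h1 := EuclideanSpace.volume_preserving_symm_measurableEquiv_toLp (Fin 3)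
  have h2 := volume_preserving_piFinSuccAbove (fun _ : Fin 3 => ℝ) 0
  have h3 := (MeasurePreserving.id (volume : Measure ℝ)).prod
    (volume_preserving_finTwoArrow ℝ)
  have key := (h3.comp h2).comp h1
  have : Φmap = (Prod.map id MeasurableEquiv.finTwoArrow) ∘
      (MeasurableEquiv.piFinSuccAbove (fun _ : Fin 3 => ℝ) 0) ∘
      (MeasurableEquiv.toLp 2 (Fin 3 → ℝ)).symm := by
    funext z
    simp [Φmap, MeasurableEquiv.piFinSuccAbove,
      MeasurableEquiv.finTwoArrow, Fin.insertNthEquiv, Fin.tail]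
  rw [this]
  exact key

lemma smul_add_apply (a b : ℝ) (x y : EuclideanSpace ℝ (Fin 3)) (i : Fin 3) :
    (a • x + b • y) i = a * x i + b * y i := rfl

lemma Kconvex (r s : ℝ) : Convex ℝ (Kset r s) := by
  intro x hx y hy a b ha hb hab
  have key : ∀ u v : Fin 3 → ℝ, ∀ i : Fin 3,
      max (a * u i + b * v i) 0 ≤ a * max (u i) 0 + b * max (v i) 0 := by
    intro u v i
    apply max_le ?_ (by positivity)
    nlinarith [le_max_left (u i) (0:ℝ), le_max_left (v i) (0:ℝ)]
  constructor
  · calc ∑ i, max ((a • x + b • y) i) 0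
        ≤ ∑ i, (a * max (x i) 0 + b * max (y i) 0) := by
          refine Finset.sum_le_sum fun i _ => ?_
          rw [smul_add_apply]; exact key _ _ i
      _ = a * (∑ i, max (x i) 0) + b * (∑ i, max (y i) 0) := by
          rw [Finset.sum_add_distrib, Finset.mul_sum, Finset.mul_sum]
      _ ≤ a * r + b * r :=
          add_le_add (mul_le_mul_of_nonneg_left hx.1 ha) (mul_le_mul_of_nonneg_left hy.1 hb)
      _ = r := by rw [← add_mul, hab, one_mul]
  · calc ∑ i, max (-(a • x + b • y) i) 0
        ≤ ∑ i, (a * max (-x i) 0 + b * max (-y i) 0) := by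
          refine Finset.sum_le_sum fun i _ => ?_
          have h : -((a • x + b • y) i) = a * (-(x i)) + b * (-(y i)) := by
            rw [smul_add_apply]; ring
          rw [h]
          simpa using key (fun j => -(x j)) (fun j => -(y j)) i
      _ = a * (∑ i, max (-x i) 0) + b * (∑ i, max (-y i) 0) := by
          rw [Finset.sum_add_distrib, Finset.mul_sum, Finset.mul_sum]
      _ ≤ a * s + b * s :=
          add_le_add (mul_le_mul_of_nonneg_left hx.2 ha) (mul_le_mul_of_nonneg_left hy.2 hb)
      _ = s := by rw [← add_mul, hab, one_mul]

lemma mem_K10 (z : EuclideanSpace ℝ (Fin 3)) :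
    z ∈ Kset 1 0 ↔ (∀ i, 0 ≤ z i) ∧ (∑ i, z i) ≤ 1 := by
  constructor
  · rintro ⟨h1, h2⟩
    rw [Fin.sum_univ_three] at h1 h2
    have m0 := le_max_right (-z 0) (0:ℝ)
    have m1 := le_max_right (-z 1) (0:ℝ)
    have m2 := le_max_right (-z 2) (0:ℝ)
    have n0 := le_max_left (-z 0) (0:ℝ)
    have n1 := le_max_left (-z 1) (0:ℝ)
    have n2 := le_max_left (-z 2) (0:ℝ)
    have p0 := le_max_left (z 0) (0:ℝ)
    have p1 := le_max_left (z 1) (0:ℝ)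
    have p2 := le_max_left (z 2) (0:ℝ)
    constructor
    · intro i
      fin_cases i
      · show (0:ℝ) ≤ z 0; linarith
      · show (0:ℝ) ≤ z 1; linarith
      · show (0:ℝ) ≤ z 2; linarith
    · rw [Fin.sum_univ_three]; linarith
  · rintro ⟨h1, h2⟩
    rw [Fin.sum_univ_three] at h2
    constructor
    · rw [Fin.sum_univ_three, max_eq_left (h1 0), max_eq_left (h1 1), max_eq_left (h1 2)]
      linarith
    · rw [Fin.sum_univ_three, max_eq_right (by linarith [h1 0] : -z 0 ≤ 0),
        max_eq_right (by linarith [h1 1] : -z 1 ≤ 0),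
        max_eq_right (by linarith [h1 2] : -z 2 ≤ 0)]
      norm_num

lemma tetra_eq : stdTetrahedron = Kset 1 0 := by
  apply Set.Subset.antisymm
  · apply convexHull_min _ (Kconvex 1 0)
    rintro z hz
    rw [mem_K10]
    simp only [Set.mem_insert_iff, Set.mem_singleton_iff] at hz
    rcases hz with rfl | rfl | rfl | rfl
    · constructor
      · intro i; simp
      · simp [Fin.sum_univ_three]
    all_goals
      constructor
      · intro i
        simp only [stdVec, EuclideanSpace.single_apply]
        split <;> norm_num
      · simp [stdVec, Fin.sum_univ_three, EuclideanSpace.single_apply]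
  · intro z hz
    rw [mem_K10] at hz
    obtain ⟨hpos, hsum⟩ := hz
    rw [Fin.sum_univ_three] at hsum
    have h0 := hpos 0; have h1 := hpos 1; have h2 := hpos 2
    have h := (convex_convexHull ℝ
        ({0, stdVec 0, stdVec 1, stdVec 2} : Set (EuclideanSpace ℝ (Fin 3)))).sum_mem
      (t := (Finset.univ : Finset (Fin 4)))
      (w := ![1 - (z 0 + z 1 + z 2), z 0, z 1, z 2])
      (z := ![0, stdVec 0, stdVec 1, stdVec 2])
      (fun i _ => by fin_cases i <;> simp <;> linarith)
      (by simp [Fin.sum_univ_four]; ring)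
      (fun i _ => subset_convexHull ℝ _ (by fin_cases i <;> simp))
    have hzeq : z = ∑ i : Fin 4,
        (![1 - (z 0 + z 1 + z 2), z 0, z 1, z 2]) i • (![0, stdVec 0, stdVec 1, stdVec 2]) i := by
      rw [Fin.sum_univ_four]
      ext j
      fin_cases j <;>
        simp [stdVec, EuclideanSpace.single_apply, PiLp.add_apply, PiLp.smul_apply,
          smul_eq_mul]
    rw [stdTetrahedron, hzeq]
    exact h

lemma diffBody_eq : stdTetrahedron + -stdTetrahedron = Kset 1 1 := by
  apply Set.Subset.antisymm
  · rintro w hw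
    rw [Set.mem_add] at hw
    obtain ⟨x, hx, y, hy, rfl⟩ := hw
    rw [Set.mem_neg, tetra_eq, mem_K10] at hy
    rw [tetra_eq, mem_K10] at hx
    have hyi : ∀ i, (-y : EuclideanSpace ℝ (Fin 3)) i = -(y i) := fun _ => rfl
    constructor
    · calc ∑ i, max ((x + y) i) 0 ≤ ∑ i, x i := by
            refine Finset.sum_le_sum fun i _ => ?_
            have hxy : (x + y) i = x i + y i := rfl
            have := hy.1 i
            rw [hyi i] at this
            exact max_le (by rw [hxy]; linarith) (hx.1 i)
        _ ≤ 1 := hx.2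
    · calc ∑ i, max (-(x + y) i) 0 ≤ ∑ i, (-y : EuclideanSpace ℝ (Fin 3)) i := by
            refine Finset.sum_le_sum fun i _ => ?_
            have hxy : (x + y) i = x i + y i := rfl
            have := hx.1 i
            rw [hyi]
            exact max_le (by rw [hxy]; linarith) (by rw [← hyi i]; exact hy.1 i)
        _ ≤ 1 := hy.2
  · intro z hz
    obtain ⟨h1, h2⟩ := hz
    set x : EuclideanSpace ℝ (Fin 3) :=
      (WithLp.equiv 2 (Fin 3 → ℝ)).symm (fun i => max (z i) 0) with hxdef
    set y : EuclideanSpace ℝ (Fin 3) :=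
      (WithLp.equiv 2 (Fin 3 → ℝ)).symm (fun i => max (-z i) 0) with hydef
    have hxi : ∀ i, x i = max (z i) 0 := fun i => rfl
    have hyi : ∀ i, y i = max (-z i) 0 := fun i => rfl
    have hx : x ∈ stdTetrahedron := by
      rw [tetra_eq, mem_K10]
      refine ⟨fun i => by rw [hxi]; exact le_max_right _ _, ?_⟩
      calc ∑ i, x i = ∑ i, max (z i) 0 := by simp [hxi]
        _ ≤ 1 := h1
    have hy : y ∈ stdTetrahedron := by
      rw [tetra_eq, mem_K10]
      refine ⟨fun i => by rw [hyi]; exact le_max_right _ _, ?_⟩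
      calc ∑ i, y i = ∑ i, max (-z i) 0 := by simp [hyi]
        _ ≤ 1 := h2
    have hzeq : z = x + (-y) := by
      ext i
      have : (x + (-y)) i = x i - y i := rfl
      rw [this, hxi, hyi]
      exact (max_zero_sub_max_neg_zero_eq_self (z i)).symm
    rw [hzeq]
    exact Set.add_mem_add hx (Set.neg_mem_neg.2 hy)

lemma volume_Kset (r s : ℝ) (hr : 0 ≤ r) (hs : 0 ≤ s) :
    volume (Kset r s)
      = ENNReal.ofReal (r ^ 3 / 6 + s ^ 3 / 6 + 3 / 2 * (r ^ 2 * s + r * s ^ 2)) := by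
  have hS : MeasurableSet {p : ℝ × ℝ × ℝ |
      max p.1 0 + (max p.2.1 0 + max p.2.2 0) ≤ r ∧
      max (-p.1) 0 + (max (-p.2.1) 0 + max (-p.2.2) 0) ≤ s} := by
    have : {p : ℝ × ℝ × ℝ |
        max p.1 0 + (max p.2.1 0 + max p.2.2 0) ≤ r ∧
        max (-p.1) 0 + (max (-p.2.1) 0 + max (-p.2.2) 0) ≤ s} =
        {p : ℝ × ℝ × ℝ | max p.1 0 + (max p.2.1 0 + max p.2.2 0) ≤ r} ∩
        {p : ℝ × ℝ × ℝ | max (-p.1) 0 + (max (-p.2.1) 0 + max (-p.2.2) 0) ≤ s} := rfl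
    rw [this]
    exact (measurableSet_le (by fun_prop) measurable_const).inter
      (measurableSet_le (by fun_prop) measurable_const)
  have hpre : Kset r s = Φmap ⁻¹' {p : ℝ × ℝ × ℝ |
      max p.1 0 + (max p.2.1 0 + max p.2.2 0) ≤ r ∧
      max (-p.1) 0 + (max (-p.2.1) 0 + max (-p.2.2) 0) ≤ s} := by
    ext z
    simp only [Kset, Set.mem_setOf_eq, Set.mem_preimage, Φmap, Fin.sum_univ_three, add_assoc]
  rw [hpre, Φmp.measure_preimage hS.nullMeasurableSet, vol3 r s hr hs]


end Helpers

/-- The volume of the difference body of the standard tetrahedron `D` is `10/3`,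
that is, `20` times the volume of `D`. -/
theorem stmt_9 :
    volume (stdTetrahedron + -stdTetrahedron) = 10 / 3 ∧
      volume (stdTetrahedron + -stdTetrahedron) = 20 * volume stdTetrahedron := by
  have hdiff : volume (stdTetrahedron + -stdTetrahedron) = ENNReal.ofReal (10 / 3) := by
    rw [diffBody_eq, volume_Kset 1 1 zero_le_one zero_le_one]
    norm_num
  have htet : volume stdTetrahedron = ENNReal.ofReal (1 / 6) := by
    rw [tetra_eq, volume_Kset 1 0 zero_le_one le_rfl]
    norm_num
  have h103 : ENNReal.ofReal (10 / 3) = (10 / 3 : ENNReal) := by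
    rw [ENNReal.ofReal_div_of_pos (by norm_num)]
    norm_num
  refine ⟨by rw [hdiff, h103], ?_⟩
  rw [hdiff, htet, show (20 : ENNReal) = ENNReal.ofReal 20 by norm_num,
    ← ENNReal.ofReal_mul (by norm_num)]
  norm_num
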